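/- arXiv:1001.0206 — 2 statements merged into one kernel-verified Lean document; each statement's English description precedes it below -/
import Mathlib

section
/- For the single-jump filtration D generated by a random time τ and mark ζ (progressively), every D ∨ F-predictable process Y admits the decomposition Y_t = Y_t^0 1_{t ≤ τ} + Y_t^1(τ,ζ) 1_{τ < t}, where Y^0 is F-predictable and Y^1(θ,e) is a P(F) ⊗ B(ℝ≥0) ⊗ B(E)-measurable indexed process. -/
open MeasureTheory Set

/-- The predictable σ-algebra on `ℝ × Ω` associated to a family of σ-algebras `𝔾`:
the σ-algebra generated by left-continuous `𝔾`-adapted processes. -/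
def predictableSA {Ω : Type*} (𝔾 : ℝ → MeasurableSpace Ω) : MeasurableSpace (ℝ × Ω) :=
  ⨆ u : {u : ℝ → Ω → ℝ // (∀ t, Measurable[𝔾 t] (u t)) ∧
      ∀ ω t, ContinuousWithinAt (fun s => u s ω) (Iic t) t},
    MeasurableSpace.comap (fun p : ℝ × Ω => u.1 p.1 p.2) inferInstance

/-- The right-continuous filtration generated progressively by a random time `τ` and a mark
`ζ` revealed at `τ`:  `D_t = ∩_{ε>0} σ(ζ 1_{τ≤s}, 1_{τ≤s} : s ≤ t+ε)`. -/
def progSA {Ω M : Type*} [MeasurableSpace M] (τ : Ω → ℝ) (ζ : Ω → M) (t : ℝ) :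
    MeasurableSpace Ω :=
  ⨅ ε : {ε : ℝ // 0 < ε}, MeasurableSpace.generateFrom
    {s | ∃ u ≤ t + ε.1, s = {ω | τ ω ≤ u} ∨
        ∃ B, MeasurableSet B ∧ s = {ω | τ ω ≤ u ∧ ζ ω ∈ B}}

namespace PredSingleAux

open Filter Topology

/-! ### Generic measurability helpers -/

/-- A pointwise limit of measurable real functions is measurable (explicit σ-algebra version). -/
lemma meas_of_tendsto {β : Type*} {M : MeasurableSpace β} {f : ℕ → β → ℝ} {g : β → ℝ}
    (hf : ∀ n, Measurable[M] (f n)) (hg : ∀ y, Tendsto (fun n => f n y) atTop (𝓝 (g y))) :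
    Measurable[M] g := by
  have hrep : g = fun y => (Filter.liminf (fun n => ((f n y : ℝ) : EReal)) atTop).toReal := by
    funext y
    have hco : Tendsto (fun n => ((f n y : ℝ) : EReal)) atTop (𝓝 ((g y : ℝ) : EReal)) :=
      (continuous_coe_real_ereal.tendsto _).comp (hg y)
    rw [hco.liminf_eq, EReal.toReal_coe]
  rw [hrep]
  exact measurable_ereal_toReal.comp
    (Measurable.liminf fun n => measurable_coe_real_ereal.comp (hf n))

/-- Transfer lemma: if every `m`-measurable set agrees on `D` with the `ρ`-pullback of an
`m'`-measurable set, then every `m`-measurable function agrees on `D` with the `ρ`-pullback of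
an `m'`-measurable function. -/
lemma transfer {α β : Type*} (m : MeasurableSpace α) (m' : MeasurableSpace β)
    (ρ : α → β) (D : Set α)
    (hset : ∀ A : Set α, MeasurableSet[m] A → ∃ A' : Set β, MeasurableSet[m'] A' ∧
      ∀ x ∈ D, (x ∈ A ↔ ρ x ∈ A'))
    (g : α → ℝ) (hg : Measurable[m] g) :
    ∃ g' : β → ℝ, Measurable[m'] g' ∧ ∀ x ∈ D, g x = g' (ρ x) := by
  classical
  letI := m
  set φ : ℕ → SimpleFunc α ℝ := fun n => SimpleFunc.approxOn g hg univ 0 (mem_univ 0) n with hφ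
  have hφt : ∀ x, Tendsto (fun n => φ n x) atTop (𝓝 (g x)) := fun x =>
    SimpleFunc.tendsto_approxOn hg (mem_univ 0) (by simp)
  choose A' hA' hiff using fun (n : ℕ) (c : ℝ) =>
    hset (φ n ⁻¹' {c}) (SimpleFunc.measurableSet_fiber (φ n) c)
  set ψ : ℕ → β → ℝ := fun n y => ∑ c ∈ (φ n).range, if y ∈ A' n c then c else 0 with hψ
  have hψm : ∀ n, Measurable[m'] (ψ n) := by
    intro n
    apply Finset.measurable_sum
    intro c _
    exact Measurable.ite (hA' n c) measurable_const measurable_const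
  have key : ∀ n, ∀ x ∈ D, ψ n (ρ x) = φ n x := by
    intro n x hx
    rw [hψ]
    simp only
    rw [Finset.sum_eq_single (φ n x)]
    · rw [if_pos ((hiff n (φ n x) x hx).mp rfl)]
    · intro c _ hne
      rw [if_neg]
      intro hmem
      exact hne ((hiff n c x hx).mpr hmem).symm
    · intro hnot
      exact absurd (SimpleFunc.mem_range_self (φ n) x) hnot
  refine ⟨fun y => (Filter.liminf (fun n => ((ψ n y : ℝ) : EReal)) atTop).toReal, ?_, ?_⟩
  · exact measurable_ereal_toReal.comp
      (Measurable.liminf fun n => measurable_coe_real_ereal.comp (hψm n))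
  · intro x hx
    have h1 : Tendsto (fun n => ψ n (ρ x)) atTop (𝓝 (g x)) :=
      (hφt x).congr fun n => (key n x hx).symm
    show g x = (Filter.liminf (fun n => ((ψ n (ρ x) : ℝ) : EReal)) atTop).toReal
    have hco : Tendsto (fun n => ((ψ n (ρ x) : ℝ) : EReal)) atTop (𝓝 ((g x : ℝ) : EReal)) :=
      (continuous_coe_real_ereal.tendsto _).comp h1
    rw [hco.liminf_eq, EReal.toReal_coe]

/-- If preimages (intersected with a set `D`) of `m`-measurable sets are `M`-measurable, then
`M`-measurability of the pull-back of an `m`-measurable function, cut off outside `D`. -/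
lemma pullback_indicator {α β : Type*} (m : MeasurableSpace α) (M : MeasurableSpace β)
    (π : β → α) (D : Set β)
    (hset : ∀ A : Set α, MeasurableSet[m] A → MeasurableSet[M] {y | y ∈ D ∧ π y ∈ A})
    (h : α → ℝ) (hh : Measurable[m] h) :
    Measurable[M] (D.indicator fun y => h (π y)) := by
  classical
  letI := m
  set φ : ℕ → SimpleFunc α ℝ := fun n => SimpleFunc.approxOn h hh univ 0 (mem_univ 0) n with hφ
  have hφt : ∀ x, Tendsto (fun n => φ n x) atTop (𝓝 (h x)) := fun x =>
    SimpleFunc.tendsto_approxOn hh (mem_univ 0) (by simp)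
  set ψ : ℕ → β → ℝ :=
    fun n y => ∑ c ∈ (φ n).range, if y ∈ D ∧ π y ∈ φ n ⁻¹' {c} then c else 0 with hψ
  have hψm : ∀ n, Measurable[M] (ψ n) := by
    intro n
    apply Finset.measurable_sum
    intro c _
    exact Measurable.ite (hset _ (SimpleFunc.measurableSet_fiber (φ n) c))
      measurable_const measurable_const
  apply meas_of_tendsto hψm
  intro y
  by_cases hy : y ∈ D
  · have hval : ∀ n, ψ n y = φ n (π y) := by
      intro n
      rw [hψ]
      simp only
      rw [Finset.sum_eq_single (φ n (π y))]
      · rw [if_pos ⟨hy, rfl⟩]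
      · intro c _ hne
        rw [if_neg]
        rintro ⟨-, hmem⟩
        exact hne hmem.symm
      · intro hnot
        exact absurd (SimpleFunc.mem_range_self (φ n) (π y)) hnot
    rw [Set.indicator_of_mem hy]
    exact (hφt (π y)).congr fun n => (hval n).symm
  · have hval : ∀ n, ψ n y = 0 := fun n =>
      Finset.sum_eq_zero fun c _ => if_neg fun hc => hy hc.1
    rw [Set.indicator_of_notMem hy]
    simp only [hval]
    exact tendsto_const_nhds

variable {Ω E : Type*} [MeasurableSpace E]

/-- Generators of the predictable σ-algebra are measurable. -/
lemma gen_mem (F : ℝ → MeasurableSpace Ω) (v : ℝ → Ω → ℝ)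
    (h1 : ∀ t, Measurable[F t] (v t))
    (h2 : ∀ ω t, ContinuousWithinAt (fun s => v s ω) (Iic t) t) :
    Measurable[predictableSA F] fun p : ℝ × Ω => v p.1 p.2 :=
  Measurable.of_comap_le (le_iSup (fun w : {w : ℝ → Ω → ℝ // (∀ t, Measurable[F t] (w t)) ∧
      ∀ ω t, ContinuousWithinAt (fun s => w s ω) (Iic t) t} =>
    MeasurableSpace.comap (fun p : ℝ × Ω => w.1 p.1 p.2) inferInstance) ⟨v, h1, h2⟩)

/-! ### The σ-algebra generated by the jump data up to a deterministic time -/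

/-- The information revealed by `(τ, ζ)` up to time `s`. -/
def Ds (τ : Ω → ℝ) (ζ : Ω → E) (s : ℝ) : MeasurableSpace Ω :=
  MeasurableSpace.generateFrom
    {A | ∃ u ≤ s, A = {ω | τ ω ≤ u} ∨ ∃ B, MeasurableSet B ∧ A = {ω | τ ω ≤ u ∧ ζ ω ∈ B}}

lemma progSA_le_Ds (τ : Ω → ℝ) (ζ : Ω → E) {t s : ℝ} (h : t < s) :
    progSA τ ζ t ≤ Ds τ ζ s := by
  have h1 : progSA τ ζ t ≤ MeasurableSpace.generateFrom
      {A | ∃ u ≤ t + (s - t), A = {ω | τ ω ≤ u} ∨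
          ∃ B, MeasurableSet B ∧ A = {ω | τ ω ≤ u ∧ ζ ω ∈ B}} :=
    iInf_le (fun ε : {ε : ℝ // 0 < ε} => MeasurableSpace.generateFrom
      {A | ∃ u ≤ t + ε.1, A = {ω | τ ω ≤ u} ∨
          ∃ B, MeasurableSet B ∧ A = {ω | τ ω ≤ u ∧ ζ ω ∈ B}}) ⟨s - t, by linarith⟩
  have h2 : t + (s - t) = s := by ring
  rw [h2] at h1
  exact h1

/-! ### Fixed-time decomposition -/

/-- The class of "good" sets for the fixed-time decomposition. -/
def good (F : ℝ → MeasurableSpace Ω) (τ : Ω → ℝ) (ζ : Ω → E) (q s : ℝ) : Set (Set Ω) :=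
  {A | ∃ A0, MeasurableSet[F q] A0 ∧ (∀ ω, s < τ ω → (ω ∈ A ↔ ω ∈ A0)) ∧
    ∃ A1 : Set (Ω × ℝ × E), MeasurableSet[(F q).prod inferInstance] A1 ∧
      ∀ ω, τ ω ≤ s → (ω ∈ A ↔ (ω, τ ω, ζ ω) ∈ A1)}

/-- The good sets form a σ-algebra. -/
def goodSA (F : ℝ → MeasurableSpace Ω) (τ : Ω → ℝ) (ζ : Ω → E) (q s : ℝ) :
    MeasurableSpace Ω where
  MeasurableSet' := good F τ ζ q s
  measurableSet_empty :=
    ⟨∅, @MeasurableSet.empty _ (F q), fun _ _ => Iff.rfl, ∅,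
      @MeasurableSet.empty _ ((F q).prod inferInstance), fun _ _ => Iff.rfl⟩
  measurableSet_compl := by
    rintro A ⟨A0, h0, e0, A1, h1, e1⟩
    exact ⟨A0ᶜ, h0.compl, fun ω h => not_congr (e0 ω h), A1ᶜ, h1.compl,
      fun ω h => not_congr (e1 ω h)⟩
  measurableSet_iUnion := by
    intro f hf
    choose A0 h0 e0 A1 h1 e1 using hf
    refine ⟨⋃ i, A0 i, MeasurableSet.iUnion h0, fun ω h => ?_, ⋃ i, A1 i,
      MeasurableSet.iUnion h1, fun ω h => ?_⟩
    · simp only [mem_iUnion]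
      exact exists_congr fun i => e0 i ω h
    · simp only [mem_iUnion]
      exact exists_congr fun i => e1 i ω h

lemma sup_le_goodSA (F : ℝ → MeasurableSpace Ω) (τ : Ω → ℝ) (ζ : Ω → E) (q s : ℝ) :
    F q ⊔ Ds τ ζ s ≤ goodSA F τ ζ q s := by
  refine sup_le ?_ ?_
  · intro A hA
    refine ⟨A, hA, fun _ _ => Iff.rfl, Prod.fst ⁻¹' A, ?_, fun _ _ => Iff.rfl⟩
    letI := F q
    exact measurable_fst hA
  · rw [Ds]
    refine MeasurableSpace.generateFrom_le ?_
    rintro A ⟨u, hu, hA | ⟨B, hB, hA⟩⟩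
    · subst hA
      letI := F q
      refine ⟨∅, @MeasurableSet.empty _ (F q),
        fun ω h => iff_of_false (fun hc => absurd (hc.trans hu) (not_le.mpr h))
          (fun hc => hc), {x : Ω × ℝ × E | x.2.1 ≤ u}, ?_, fun ω _ => Iff.rfl⟩
      exact (measurable_fst.comp measurable_snd) measurableSet_Iic
    · subst hA
      letI := F q
      refine ⟨∅, @MeasurableSet.empty _ (F q),
        fun ω h => iff_of_false (fun hc => absurd (hc.1.trans hu) (not_le.mpr h))
          (fun hc => hc), {x : Ω × ℝ × E | x.2.1 ≤ u ∧ x.2.2 ∈ B}, ?_, fun ω _ => Iff.rfl⟩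
      exact MeasurableSet.inter ((measurable_fst.comp measurable_snd) measurableSet_Iic)
        ((measurable_snd.comp measurable_snd) hB)

/-- Fixed-time decomposition of a `F_q ⊔ D_s`-measurable function. -/
lemma fixed_decomp (F : ℝ → MeasurableSpace Ω) (τ : Ω → ℝ) (ζ : Ω → E) (q s : ℝ)
    (g : Ω → ℝ) (hg : Measurable[F q ⊔ Ds τ ζ s] g) :
    ∃ (g0 : Ω → ℝ) (g1 : Ω × ℝ × E → ℝ),
      Measurable[F q] g0 ∧ Measurable[(F q).prod inferInstance] g1 ∧
      (∀ ω, s < τ ω → g ω = g0 ω) ∧ (∀ ω, τ ω ≤ s → g ω = g1 (ω, τ ω, ζ ω)) := by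
  have hgood : ∀ A, MeasurableSet[F q ⊔ Ds τ ζ s] A → good F τ ζ q s A :=
    fun A hA => sup_le_goodSA F τ ζ q s A hA
  obtain ⟨g0, hg0, e0⟩ := transfer (F q ⊔ Ds τ ζ s) (F q) id {ω | s < τ ω}
    (fun A hA => by
      obtain ⟨A0, h0, e0, -, -, -⟩ := hgood A hA
      exact ⟨A0, h0, fun x hx => e0 x hx⟩) g hg
  obtain ⟨g1, hg1, e1⟩ := transfer (F q ⊔ Ds τ ζ s) ((F q).prod inferInstance)
    (fun ω => (ω, τ ω, ζ ω)) {ω | τ ω ≤ s}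
    (fun A hA => by
      obtain ⟨-, -, -, A1, h1, e1⟩ := hgood A hA
      exact ⟨A1, h1, fun x hx => e1 x hx⟩) g hg
  exact ⟨g0, g1, hg0, hg1, fun ω h => e0 ω h, fun ω h => e1 ω h⟩

/-! ### Elementary predictable sets -/

lemma elem_pred (F : ℝ → MeasurableSpace Ω) (hFmono : Monotone F) (a b : ℝ)
    (A0 : Set Ω) (hA0 : MeasurableSet[F a] A0) :
    MeasurableSet[predictableSA F] {p : ℝ × Ω | p.1 ∈ Ioc a b ∧ p.2 ∈ A0} := by
  classical
  set u : ℝ → Ω → ℝ := fun t ω => if t ∈ Ioc a b ∧ ω ∈ A0 then 1 else 0 with hu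
  have h1 : ∀ t, Measurable[F t] (u t) := by
    intro t
    by_cases ht : t ∈ Ioc a b
    · have : u t = fun ω => if ω ∈ A0 then (1 : ℝ) else 0 := by
        funext ω
        show (if t ∈ Ioc a b ∧ ω ∈ A0 then (1 : ℝ) else 0) = _
        by_cases hω : ω ∈ A0
        · rw [if_pos ⟨ht, hω⟩, if_pos hω]
        · rw [if_neg (fun hc => hω hc.2), if_neg hω]
      rw [this]
      exact Measurable.ite (hFmono ht.1.le A0 hA0) measurable_const measurable_const
    · have : u t = fun _ => (0 : ℝ) := by
        funext ω
        show (if t ∈ Ioc a b ∧ ω ∈ A0 then (1 : ℝ) else 0) = 0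
        rw [if_neg (fun hc => ht hc.1)]
      rw [this]; exact measurable_const
  have h2 : ∀ ω t, ContinuousWithinAt (fun s => u s ω) (Iic t) t := by
    intro ω t
    by_cases hω : ω ∈ A0
    swap
    · have : (fun s => u s ω) = fun _ => (0 : ℝ) := by
        funext s
        show (if s ∈ Ioc a b ∧ ω ∈ A0 then (1 : ℝ) else 0) = 0
        rw [if_neg (fun hc => hω hc.2)]
      rw [this]; exact continuousWithinAt_const
    · obtain ⟨c, hc, hconst⟩ : ∃ c < t, ∀ s ∈ Ioc c t, u s ω = u t ω := by
        rcases le_or_gt t a with h | h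
        · refine ⟨t - 1, by linarith, fun s hs => ?_⟩
          have hs' : ¬(s ∈ Ioc a b ∧ ω ∈ A0) :=
            fun hc' => absurd hc'.1.1 (not_lt.mpr (hs.2.trans h))
          have ht' : ¬(t ∈ Ioc a b ∧ ω ∈ A0) := fun hc' => absurd hc'.1.1 (not_lt.mpr h)
          show (if s ∈ Ioc a b ∧ ω ∈ A0 then (1 : ℝ) else 0) =
            if t ∈ Ioc a b ∧ ω ∈ A0 then (1 : ℝ) else 0
          rw [if_neg hs', if_neg ht']
        rcases le_or_gt t b with h' | h'
        · refine ⟨a, h, fun s hs => ?_⟩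
          have hs' : s ∈ Ioc a b := ⟨hs.1, hs.2.trans h'⟩
          show (if s ∈ Ioc a b ∧ ω ∈ A0 then (1 : ℝ) else 0) =
            if t ∈ Ioc a b ∧ ω ∈ A0 then (1 : ℝ) else 0
          rw [if_pos ⟨hs', hω⟩, if_pos ⟨⟨h, h'⟩, hω⟩]
        · refine ⟨b, h', fun s hs => ?_⟩
          have hs' : ¬(s ∈ Ioc a b ∧ ω ∈ A0) :=
            fun hc' => absurd hc'.1.2 (not_le.mpr hs.1)
          have ht' : ¬(t ∈ Ioc a b ∧ ω ∈ A0) := fun hc' => absurd hc'.1.2 (not_le.mpr h')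
          show (if s ∈ Ioc a b ∧ ω ∈ A0 then (1 : ℝ) else 0) =
            if t ∈ Ioc a b ∧ ω ∈ A0 then (1 : ℝ) else 0
          rw [if_neg hs', if_neg ht']
      have hev : (fun s => u s ω) =ᶠ[nhdsWithin t (Iic t)] fun _ => u t ω :=
        Filter.eventuallyEq_of_mem (Ioc_mem_nhdsLE hc) hconst
      exact continuousWithinAt_const.congr_of_eventuallyEq hev rfl
  have hmeas : Measurable[predictableSA F] fun p : ℝ × Ω => u p.1 p.2 := gen_mem F u h1 h2
  have hset : {p : ℝ × Ω | p.1 ∈ Ioc a b ∧ p.2 ∈ A0} =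
      (fun p : ℝ × Ω => u p.1 p.2) ⁻¹' {1} := by
    ext p
    show (p.1 ∈ Ioc a b ∧ p.2 ∈ A0) ↔
      (if p.1 ∈ Ioc a b ∧ p.2 ∈ A0 then (1 : ℝ) else 0) ∈ ({1} : Set ℝ)
    by_cases hp : p.1 ∈ Ioc a b ∧ p.2 ∈ A0
    · rw [if_pos hp]
      exact iff_of_true hp rfl
    · rw [if_neg hp]
      exact iff_of_false hp (by norm_num)
  rw [hset]
  exact hmeas (measurableSet_singleton 1)

/-! ### Post-jump plumbing -/

lemma Bset (F : ℝ → MeasurableSpace Ω) (hFmono : Monotone F) (a b : ℝ) :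
    ∀ A : Set (Ω × ℝ × E), MeasurableSet[(F a).prod inferInstance] A →
      MeasurableSet[(predictableSA F).prod inferInstance]
        {q : (ℝ × Ω) × ℝ × E | q.1.1 ∈ Ioc a b ∧ (q.1.2, q.2) ∈ A} := by
  letI : MeasurableSpace (ℝ × Ω) := predictableSA F
  have hD : MeasurableSet[(predictableSA F).prod inferInstance]
      {q : (ℝ × Ω) × ℝ × E | q.1.1 ∈ Ioc a b} := by
    have h1 : MeasurableSet[predictableSA F] {p : ℝ × Ω | p.1 ∈ Ioc a b} := by
      have := elem_pred F hFmono a b univ MeasurableSet.univ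
      simpa using this
    have heq : {q : (ℝ × Ω) × ℝ × E | q.1.1 ∈ Ioc a b} =
        Prod.fst ⁻¹' {p : ℝ × Ω | p.1 ∈ Ioc a b} := rfl
    rw [heq]
    exact measurable_fst h1
  let mC : MeasurableSpace (Ω × ℝ × E) :=
    { MeasurableSet' := fun A => MeasurableSet[(predictableSA F).prod inferInstance]
        {q : (ℝ × Ω) × ℝ × E | q.1.1 ∈ Ioc a b ∧ (q.1.2, q.2) ∈ A}
      measurableSet_empty := by
        show MeasurableSet[(predictableSA F).prod inferInstance]
          {q : (ℝ × Ω) × ℝ × E | q.1.1 ∈ Ioc a b ∧ (q.1.2, q.2) ∈ (∅ : Set (Ω × ℝ × E))}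
        have heq : {q : (ℝ × Ω) × ℝ × E | q.1.1 ∈ Ioc a b ∧
            (q.1.2, q.2) ∈ (∅ : Set (Ω × ℝ × E))} = ∅ := by
          ext q
          simp only [mem_setOf_eq, mem_empty_iff_false, and_false]
        rw [heq]
        exact MeasurableSet.empty
      measurableSet_compl := by
        intro A hA
        show MeasurableSet[(predictableSA F).prod inferInstance]
          {q : (ℝ × Ω) × ℝ × E | q.1.1 ∈ Ioc a b ∧ (q.1.2, q.2) ∈ Aᶜ}
        have heq : {q : (ℝ × Ω) × ℝ × E | q.1.1 ∈ Ioc a b ∧ (q.1.2, q.2) ∈ Aᶜ} =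
            {q : (ℝ × Ω) × ℝ × E | q.1.1 ∈ Ioc a b} \
              {q : (ℝ × Ω) × ℝ × E | q.1.1 ∈ Ioc a b ∧ (q.1.2, q.2) ∈ A} := by
          ext q
          simp only [mem_setOf_eq, mem_diff, mem_compl_iff]
          tauto
        rw [heq]
        exact hD.diff hA
      measurableSet_iUnion := by
        intro f hf
        show MeasurableSet[(predictableSA F).prod inferInstance]
          {q : (ℝ × Ω) × ℝ × E | q.1.1 ∈ Ioc a b ∧ (q.1.2, q.2) ∈ ⋃ i, f i}
        have heq : {q : (ℝ × Ω) × ℝ × E | q.1.1 ∈ Ioc a b ∧ (q.1.2, q.2) ∈ ⋃ i, f i} =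
            ⋃ i, {q : (ℝ × Ω) × ℝ × E | q.1.1 ∈ Ioc a b ∧ (q.1.2, q.2) ∈ f i} := by
          ext q
          simp only [mem_iUnion, mem_setOf_eq]
          constructor
          · rintro ⟨h1, i, h2⟩; exact ⟨i, h1, h2⟩
          · rintro ⟨i, h1, h2⟩; exact ⟨h1, i, h2⟩
        rw [heq]
        exact MeasurableSet.iUnion hf }
  intro A hA
  have hle : (F a).prod inferInstance ≤ mC := by
    refine sup_le ?_ ?_
    · rintro A' ⟨A0, hA0, rfl⟩
      show MeasurableSet[(predictableSA F).prod inferInstance] _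
      have heq : {q : (ℝ × Ω) × ℝ × E | q.1.1 ∈ Ioc a b ∧ (q.1.2, q.2) ∈ Prod.fst ⁻¹' A0} =
          {p : ℝ × Ω | p.1 ∈ Ioc a b ∧ p.2 ∈ A0} ×ˢ (univ : Set (ℝ × E)) := by
        ext q
        simp [Set.mem_prod]
      rw [heq]
      exact (elem_pred F hFmono a b A0 hA0).prod MeasurableSet.univ
    · rintro A' ⟨B, hB, rfl⟩
      show MeasurableSet[(predictableSA F).prod inferInstance] _
      have heq : {q : (ℝ × Ω) × ℝ × E | q.1.1 ∈ Ioc a b ∧ (q.1.2, q.2) ∈ Prod.snd ⁻¹' B} =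
          {p : ℝ × Ω | p.1 ∈ Ioc a b} ×ˢ B := by
        ext q
        simp [Set.mem_prod]
      rw [heq]
      refine MeasurableSet.prod ?_ hB
      have := elem_pred F hFmono a b univ MeasurableSet.univ
      simpa using this
  exact hle A hA

lemma Bfun (F : ℝ → MeasurableSpace Ω) (hFmono : Monotone F) (a b : ℝ)
    (h : Ω × ℝ × E → ℝ) (hh : Measurable[(F a).prod inferInstance] h) :
    Measurable[(predictableSA F).prod inferInstance]
      (({q : (ℝ × Ω) × ℝ × E | q.1.1 ∈ Ioc a b}).indicator
        fun q => h (q.1.2, q.2)) := by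
  exact pullback_indicator ((F a).prod inferInstance) ((predictableSA F).prod inferInstance)
    (fun q => (q.1.2, q.2)) {q : (ℝ × Ω) × ℝ × E | q.1.1 ∈ Ioc a b}
    (fun A hA => Bset F hFmono a b A hA) h hh

/-! ### Grid approximations from the left -/

/-- Left grid point at scale `n`, two steps below `t`. -/
noncomputable def gridq (n : ℕ) (t : ℝ) : ℝ :=
  ((⌈t * ((n : ℝ) + 1)⌉ : ℝ) - 2) / ((n : ℝ) + 1)

/-- Left grid point at scale `n`, one step below `t`. -/
noncomputable def grids (n : ℕ) (t : ℝ) : ℝ :=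
  ((⌈t * ((n : ℝ) + 1)⌉ : ℝ) - 1) / ((n : ℝ) + 1)

lemma npos (n : ℕ) : (0 : ℝ) < (n : ℝ) + 1 := by positivity

lemma gridq_lt_grids (n : ℕ) (t : ℝ) : gridq n t < grids n t := by
  unfold gridq grids
  rw [div_lt_div_iff_of_pos_right (npos n)]
  linarith

lemma grids_lt (n : ℕ) (t : ℝ) : grids n t < t := by
  unfold grids
  rw [div_lt_iff₀ (npos n)]
  have := Int.ceil_lt_add_one (t * ((n : ℝ) + 1))
  linarith

lemma gridq_lt (n : ℕ) (t : ℝ) : gridq n t < t :=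
  (gridq_lt_grids n t).trans (grids_lt n t)

lemma gridq_lb (n : ℕ) (t : ℝ) : t - 2 / ((n : ℝ) + 1) ≤ gridq n t := by
  unfold gridq
  rw [le_div_iff₀ (npos n)]
  have h1 := Int.le_ceil (t * ((n : ℝ) + 1))
  have hexp : (t - 2 / ((n : ℝ) + 1)) * ((n : ℝ) + 1) = t * ((n : ℝ) + 1) - 2 := by
    field_simp
  rw [hexp]
  linarith

lemma grids_lb (n : ℕ) (t : ℝ) : t - 1 / ((n : ℝ) + 1) ≤ grids n t := by
  unfold grids
  rw [le_div_iff₀ (npos n)]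
  have h1 := Int.le_ceil (t * ((n : ℝ) + 1))
  have hexp : (t - 1 / ((n : ℝ) + 1)) * ((n : ℝ) + 1) = t * ((n : ℝ) + 1) - 1 := by
    field_simp
  rw [hexp]
  linarith

lemma one_div_nat_tendsto : Tendsto (fun n : ℕ => 1 / ((n : ℝ) + 1)) atTop (𝓝 0) :=
  tendsto_one_div_add_atTop_nhds_zero_nat

lemma gridq_tendsto (t : ℝ) : Tendsto (fun n => gridq n t) atTop (𝓝[Iic t] t) := by
  rw [tendsto_nhdsWithin_iff]
  constructor
  · have hlow : Tendsto (fun n : ℕ => t - 2 / ((n : ℝ) + 1)) atTop (𝓝 t) := by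
      have h2 : Tendsto (fun n : ℕ => 2 * (1 / ((n : ℝ) + 1))) atTop (𝓝 (2 * 0)) :=
        one_div_nat_tendsto.const_mul 2
      have hconst : Tendsto (fun _ : ℕ => t) atTop (𝓝 t) := tendsto_const_nhds
      have h3 := hconst.sub h2
      have heq : (fun n : ℕ => t - 2 * (1 / ((n : ℝ) + 1))) =
          fun n : ℕ => t - 2 / ((n : ℝ) + 1) := by
        funext n; ring
      rw [heq] at h3
      simpa using h3
    exact tendsto_of_tendsto_of_tendsto_of_le_of_le hlow tendsto_const_nhds
      (fun n => gridq_lb n t) (fun n => (gridq_lt n t).le)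
  · exact Filter.Eventually.of_forall fun n => (gridq_lt n t).le

/-- The ceiling function is locally constant from the left. -/
lemma ceil_loc (n : ℕ) (t : ℝ) :
    ∀ᶠ s in 𝓝[Iic t] t, ⌈s * ((n : ℝ) + 1)⌉ = ⌈t * ((n : ℝ) + 1)⌉ := by
  have hc := npos n
  have hlt : ((⌈t * ((n : ℝ) + 1)⌉ : ℝ) - 1) / ((n : ℝ) + 1) < t := by
    rw [div_lt_iff₀ hc]
    have := Int.ceil_lt_add_one (t * ((n : ℝ) + 1))
    linarith
  refine Filter.eventually_of_mem (Ioc_mem_nhdsLE hlt) ?_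
  intro s hs
  rw [Int.ceil_eq_iff]
  constructor
  · have := (div_lt_iff₀ hc).mp hs.1
    linarith
  · have h2 : s * ((n : ℝ) + 1) ≤ t * ((n : ℝ) + 1) :=
      mul_le_mul_of_nonneg_right hs.2 hc.le
    exact h2.trans (Int.le_ceil _)

lemma grid_loc (n : ℕ) (t : ℝ) :
    ∀ᶠ s in 𝓝[Iic t] t, gridq n s = gridq n t ∧ grids n s = grids n t := by
  filter_upwards [ceil_loc n t] with s hs
  constructor
  · unfold gridq; rw [hs]
  · unfold grids; rw [hs]

/-- Rearrangement: a left-continuous process adapted to `(F t) ⊗ B(ℝ×E)` gives a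
`P(F) ⊗ B(ℝ×E)`-measurable map after rearranging the coordinates. -/
lemma stepR (F : ℝ → MeasurableSpace Ω) (hFmono : Monotone F) :
    @Measurable ((ℝ × Ω) × ℝ × E) (ℝ × (Ω × ℝ × E)) ((predictableSA F).prod inferInstance)
      (predictableSA fun t => (F t).prod inferInstance)
      (fun q => (q.1.1, (q.1.2, q.2))) := by
  rw [measurable_iff_comap_le]
  unfold predictableSA
  rw [MeasurableSpace.comap_iSup]
  refine iSup_le ?_
  rintro ⟨v, hv1, hv2⟩
  rw [MeasurableSpace.comap_comp]
  rw [← measurable_iff_comap_le]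
  show Measurable[(predictableSA F).prod inferInstance]
    fun q : (ℝ × Ω) × ℝ × E => v q.1.1 (q.1.2, q.2)
  have stage1 : ∀ m : ℕ, Measurable[(predictableSA F).prod inferInstance]
      fun q : (ℝ × Ω) × ℝ × E => v (grids m q.1.1) (q.1.2, q.2) := by
    intro m
    have hm : (0 : ℝ) < (m : ℝ) + 1 := npos m
    set T : ℤ → ((ℝ × Ω) × ℝ × E) → ℝ := fun k =>
      ({q : (ℝ × Ω) × ℝ × E |
          q.1.1 ∈ Ioc (((k : ℝ) - 1) / ((m : ℝ) + 1)) ((k : ℝ) / ((m : ℝ) + 1))}).indicator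
        fun q => v (((k : ℝ) - 1) / ((m : ℝ) + 1)) (q.1.2, q.2) with hT
    have hTm : ∀ k : ℤ, Measurable[(predictableSA F).prod inferInstance] (T k) := by
      intro k
      exact Bfun F hFmono _ _ _ (hv1 (((k : ℝ) - 1) / ((m : ℝ) + 1)))
    have hcell : ∀ (x : ℝ) (k : ℤ),
        x ∈ Ioc (((k : ℝ) - 1) / ((m : ℝ) + 1)) ((k : ℝ) / ((m : ℝ) + 1)) ↔
          ⌈x * ((m : ℝ) + 1)⌉ = k := by
      intro x k
      rw [Int.ceil_eq_iff]
      constructor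
      · rintro ⟨h1, h2⟩
        constructor
        · have := (div_lt_iff₀ hm).mp h1
          linarith
        · have := (le_div_iff₀ hm).mp h2
          linarith
      · rintro ⟨h1, h2⟩
        constructor
        · rw [div_lt_iff₀ hm]; linarith
        · rw [le_div_iff₀ hm]; linarith
    apply meas_of_tendsto (f := fun N q => ∑ k ∈ Finset.Icc (-(N : ℤ)) (N : ℤ), T k q)
    · intro N
      apply Finset.measurable_sum
      intro k _
      exact hTm k
    · intro q
      have hself : q ∈ {q' : (ℝ × Ω) × ℝ × E | q'.1.1 ∈
          Ioc (((⌈q.1.1 * ((m : ℝ) + 1)⌉ : ℝ) - 1) / ((m : ℝ) + 1))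
            ((⌈q.1.1 * ((m : ℝ) + 1)⌉ : ℝ) / ((m : ℝ) + 1))} :=
        (hcell q.1.1 ⌈q.1.1 * ((m : ℝ) + 1)⌉).mpr rfl
      have hval : T ⌈q.1.1 * ((m : ℝ) + 1)⌉ q = v (grids m q.1.1) (q.1.2, q.2) := by
        rw [hT]
        exact Set.indicator_of_mem hself _
      have hev : ∀ᶠ N : ℕ in atTop,
          (∑ k ∈ Finset.Icc (-(N : ℤ)) (N : ℤ), T k q) = v (grids m q.1.1) (q.1.2, q.2) := by
        rw [eventually_atTop]
        refine ⟨(⌈q.1.1 * ((m : ℝ) + 1)⌉).natAbs, fun N hN => ?_⟩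
        rw [Finset.sum_eq_single_of_mem (⌈q.1.1 * ((m : ℝ) + 1)⌉)
          (Finset.mem_Icc.mpr (by omega))]
        · exact hval
        · intro j _ hne
          have hnm : q ∉ {q' : (ℝ × Ω) × ℝ × E | q'.1.1 ∈
              Ioc (((j : ℝ) - 1) / ((m : ℝ) + 1)) ((j : ℝ) / ((m : ℝ) + 1))} := by
            intro hmem
            exact hne ((hcell q.1.1 j).mp hmem).symm
          rw [hT]
          exact Set.indicator_of_notMem hnm _
      exact tendsto_const_nhds.congr' (by filter_upwards [hev] with N hN; exact hN.symm)
  apply meas_of_tendsto stage1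
  intro q
  have h1 : Tendsto (fun m : ℕ => grids m q.1.1) atTop (𝓝[Iic q.1.1] q.1.1) := by
    rw [tendsto_nhdsWithin_iff]
    constructor
    · have hlow : Tendsto (fun m : ℕ => q.1.1 - 1 / ((m : ℝ) + 1)) atTop (𝓝 q.1.1) := by
        have hconst : Tendsto (fun _ : ℕ => q.1.1) atTop (𝓝 q.1.1) := tendsto_const_nhds
        have h3 := hconst.sub one_div_nat_tendsto
        simpa using h3
      exact tendsto_of_tendsto_of_tendsto_of_le_of_le hlow tendsto_const_nhds
        (fun m => grids_lb m q.1.1) (fun m => (grids_lt m q.1.1).le)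
    · exact Filter.Eventually.of_forall fun m => (grids_lt m q.1.1).le
  exact ((hv2 (q.1.2, q.2) q.1.1).tendsto).comp h1

/-! ### Decomposition of a single generator -/

set_option maxHeartbeats 2000000 in
lemma core (F : ℝ → MeasurableSpace Ω) (hFmono : Monotone F) (τ : Ω → ℝ) (ζ : Ω → E)
    (𝔾 : ℝ → MeasurableSpace Ω) (h𝔾 : ∀ t, 𝔾 t = F t ⊔ progSA τ ζ t)
    (u : ℝ → Ω → ℝ) (hu1 : ∀ t, Measurable[𝔾 t] (u t))
    (hu2 : ∀ ω t, ContinuousWithinAt (fun s => u s ω) (Iic t) t) :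
    ∃ u0 : ℝ → Ω → ℝ, (Measurable[predictableSA F] fun p : ℝ × Ω => u0 p.1 p.2) ∧
      (∀ t ω, t ≤ τ ω → u t ω = u0 t ω) ∧
      ∃ u1 : (ℝ × Ω) × ℝ × E → ℝ, Measurable[(predictableSA F).prod inferInstance] u1 ∧
        ∀ t ω, τ ω < t → u t ω = u1 ((t, ω), (τ ω, ζ ω)) := by
  classical
  have hfix : ∀ q s : ℝ, ∃ (g0 : Ω → ℝ) (g1 : Ω × ℝ × E → ℝ),
      Measurable[F q] g0 ∧ Measurable[(F q).prod inferInstance] g1 ∧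
      (q < s → ∀ ω, s < τ ω → u q ω = g0 ω) ∧
      (q < s → ∀ ω, τ ω ≤ s → u q ω = g1 (ω, τ ω, ζ ω)) := by
    intro q s
    by_cases h : q < s
    · have hm : Measurable[F q ⊔ Ds τ ζ s] (u q) := by
        refine Measurable.le ?_ (hu1 q)
        rw [h𝔾 q]
        exact sup_le_sup le_rfl (progSA_le_Ds τ ζ h)
      obtain ⟨g0, g1, m0, m1, e0, e1⟩ := fixed_decomp F τ ζ q s (u q) hm
      exact ⟨g0, g1, m0, m1, fun _ => e0, fun _ => e1⟩
    · exact ⟨fun _ => 0, fun _ => 0, measurable_const, measurable_const,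
        fun hc => absurd hc h, fun hc => absurd hc h⟩
  choose g0 g1 hg0m hg1m hg0e hg1e using hfix
  -- pre-jump part
  have hVgen : ∀ n : ℕ, Measurable[predictableSA F]
      fun p : ℝ × Ω => g0 (gridq n p.1) (grids n p.1) p.2 := by
    intro n
    refine gen_mem F (fun t => g0 (gridq n t) (grids n t)) ?_ ?_
    · intro t
      exact Measurable.le (hFmono (gridq_lt n t).le) (hg0m (gridq n t) (grids n t))
    · intro ω t
      have hev : (fun s => g0 (gridq n s) (grids n s) ω) =ᶠ[𝓝[Iic t] t]
          fun _ => g0 (gridq n t) (grids n t) ω := by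
        filter_upwards [grid_loc n t] with s hs
        rw [hs.1, hs.2]
      exact continuousWithinAt_const.congr_of_eventuallyEq hev rfl
  refine ⟨fun t ω => (Filter.liminf
      (fun n => ((g0 (gridq n t) (grids n t) ω : ℝ) : EReal)) atTop).toReal, ?_, ?_, ?_⟩
  · exact measurable_ereal_toReal.comp
      (Measurable.liminf fun n => measurable_coe_real_ereal.comp (hVgen n))
  · intro t ω h
    have hVt : Tendsto (fun n => g0 (gridq n t) (grids n t) ω) atTop (𝓝 (u t ω)) := by
      have h2 : Tendsto (fun n => u (gridq n t) ω) atTop (𝓝 (u t ω)) :=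
        ((hu2 ω t).tendsto).comp (gridq_tendsto t)
      exact h2.congr fun n =>
        hg0e (gridq n t) (grids n t) (gridq_lt_grids n t) ω
          (lt_of_lt_of_le (grids_lt n t) h)
    show u t ω = (Filter.liminf
      (fun n => ((g0 (gridq n t) (grids n t) ω : ℝ) : EReal)) atTop).toReal
    have hco : Tendsto (fun n => ((g0 (gridq n t) (grids n t) ω : ℝ) : EReal)) atTop
        (𝓝 ((u t ω : ℝ) : EReal)) := (continuous_coe_real_ereal.tendsto _).comp hVt
    rw [hco.liminf_eq, EReal.toReal_coe]
  -- post-jump part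
  · have hWgen : ∀ n : ℕ, Measurable[predictableSA fun t => (F t).prod
        (inferInstance : MeasurableSpace (ℝ × E))]
        fun p : ℝ × (Ω × ℝ × E) => g1 (gridq n p.1) (grids n p.1) p.2 := by
      intro n
      refine gen_mem (fun t => (F t).prod inferInstance)
        (fun t => g1 (gridq n t) (grids n t)) ?_ ?_
      · intro t
        refine Measurable.le ?_ (hg1m (gridq n t) (grids n t))
        exact sup_le_sup
          (MeasurableSpace.comap_mono (hFmono (gridq_lt n t).le)) le_rfl
      · intro x t
        have hev : (fun s => g1 (gridq n s) (grids n s) x) =ᶠ[𝓝[Iic t] t]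
            fun _ => g1 (gridq n t) (grids n t) x := by
          filter_upwards [grid_loc n t] with s hs
          rw [hs.1, hs.2]
        exact continuousWithinAt_const.congr_of_eventuallyEq hev rfl
    have hWmeas : ∀ n : ℕ, Measurable[(predictableSA F).prod inferInstance]
        fun q : (ℝ × Ω) × ℝ × E => g1 (gridq n q.1.1) (grids n q.1.1) (q.1.2, q.2) := by
      intro n
      show Measurable[(predictableSA F).prod inferInstance]
        ((fun p : ℝ × (Ω × ℝ × E) => g1 (gridq n p.1) (grids n p.1) p.2) ∘
          (fun q : (ℝ × Ω) × ℝ × E => (q.1.1, (q.1.2, q.2))))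
      exact Measurable.comp (hWgen n) (stepR F hFmono)
    refine ⟨fun q => (Filter.liminf
        (fun n => ((g1 (gridq n q.1.1) (grids n q.1.1) (q.1.2, q.2) : ℝ) : EReal))
          atTop).toReal, ?_, ?_⟩
    · exact measurable_ereal_toReal.comp
        (Measurable.liminf fun n => measurable_coe_real_ereal.comp (hWmeas n))
    · intro t ω h
      have hev : ∀ᶠ n : ℕ in atTop, τ ω ≤ grids n t := by
        obtain ⟨n0, hn0⟩ := exists_nat_one_div_lt (show (0 : ℝ) < t - τ ω by linarith)
        rw [eventually_atTop]
        refine ⟨n0, fun n hn => ?_⟩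
        have hmono : 1 / ((n : ℝ) + 1) ≤ 1 / ((n0 : ℝ) + 1) := by
          apply one_div_le_one_div_of_le
          · positivity
          · have : (n0 : ℝ) ≤ (n : ℝ) := Nat.cast_le.mpr hn
            linarith
        have := grids_lb n t
        linarith
      have hWt : Tendsto (fun n => g1 (gridq n t) (grids n t) (ω, τ ω, ζ ω)) atTop
          (𝓝 (u t ω)) := by
        have h2 : Tendsto (fun n => u (gridq n t) ω) atTop (𝓝 (u t ω)) :=
          ((hu2 ω t).tendsto).comp (gridq_tendsto t)
        refine h2.congr' ?_
        filter_upwards [hev] with n hn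
        exact hg1e (gridq n t) (grids n t) (gridq_lt_grids n t) ω hn
      show u t ω = (Filter.liminf
        (fun n => ((g1 (gridq n t) (grids n t) (ω, τ ω, ζ ω) : ℝ) : EReal)) atTop).toReal
      have hco : Tendsto
          (fun n => ((g1 (gridq n t) (grids n t) (ω, τ ω, ζ ω) : ℝ) : EReal)) atTop
          (𝓝 ((u t ω : ℝ) : EReal)) := (continuous_coe_real_ereal.tendsto _).comp hWt
      rw [hco.liminf_eq, EReal.toReal_coe]

end PredSingleAux

/-- every `G = F ∨ D`-predictable process `Y` decomposes as
`Y_t = Y_t^0 1_{t ≤ τ} + Y_t^1(τ,ζ) 1_{τ < t}` with `Y^0` `F`-predictable and `Y^1` an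
indexed `P(F) ⊗ B(ℝ≥0) ⊗ B(E)`-measurable process. -/
theorem predictable_decomposition_single_time
    {Ω E : Type*} [MeasurableSpace Ω] [MeasurableSpace E]
    (F : ℝ → MeasurableSpace Ω) (hFmono : Monotone F)
    (hF : ∀ t, F t ≤ ‹MeasurableSpace Ω›)
    (τ : Ω → ℝ) (hτ0 : ∀ ω, 0 ≤ τ ω) (ζ : Ω → E)
    (𝔾 : ℝ → MeasurableSpace Ω) (h𝔾 : ∀ t, 𝔾 t = F t ⊔ progSA τ ζ t)
    (Y : ℝ → Ω → ℝ)
    (hY : @Measurable (ℝ × Ω) ℝ (predictableSA 𝔾) _ fun p => Y p.1 p.2) :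
    ∃ (Y0 : ℝ → Ω → ℝ) (Y1 : ℝ → ℝ → E → Ω → ℝ),
      (@Measurable (ℝ × Ω) ℝ (predictableSA F) _ fun p => Y0 p.1 p.2) ∧
      (@Measurable ((ℝ × Ω) × ℝ × E) ℝ
        ((predictableSA F).prod inferInstance) _
        fun q => Y1 q.1.1 q.2.1 q.2.2 q.1.2) ∧
      ∀ t ω, Y t ω = if t ≤ τ ω then Y0 t ω else Y1 t (τ ω) (ζ ω) ω := by
  classical
  open PredSingleAux in
  have htop : ∀ S : Set (ℝ × Ω), MeasurableSet[predictableSA 𝔾] S →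
      ∃ S0, MeasurableSet[predictableSA F] S0 ∧
      ∃ S1, MeasurableSet[(predictableSA F).prod inferInstance] S1 ∧
      (∀ p : ℝ × Ω, p.1 ≤ τ p.2 → (p ∈ S ↔ p ∈ S0)) ∧
      (∀ p : ℝ × Ω, τ p.2 < p.1 → (p ∈ S ↔ (p, (τ p.2, ζ p.2)) ∈ S1)) := by
    let mT : MeasurableSpace (ℝ × Ω) :=
      { MeasurableSet' := fun S =>
          ∃ S0, MeasurableSet[predictableSA F] S0 ∧
          ∃ S1, MeasurableSet[(predictableSA F).prod inferInstance] S1 ∧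
          (∀ p : ℝ × Ω, p.1 ≤ τ p.2 → (p ∈ S ↔ p ∈ S0)) ∧
          (∀ p : ℝ × Ω, τ p.2 < p.1 → (p ∈ S ↔ (p, (τ p.2, ζ p.2)) ∈ S1))
        measurableSet_empty :=
          ⟨∅, @MeasurableSet.empty _ (predictableSA F), ∅,
            @MeasurableSet.empty _ ((predictableSA F).prod inferInstance),
            fun _ _ => Iff.rfl, fun _ _ => Iff.rfl⟩
        measurableSet_compl := by
          rintro S ⟨S0, h0, S1, h1, e0, e1⟩
          exact ⟨S0ᶜ, h0.compl, S1ᶜ, h1.compl, fun p hp => not_congr (e0 p hp),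
            fun p hp => not_congr (e1 p hp)⟩
        measurableSet_iUnion := by
          intro f hf
          choose S0 h0 S1 h1 e0 e1 using hf
          refine ⟨⋃ i, S0 i, MeasurableSet.iUnion h0, ⋃ i, S1 i,
            MeasurableSet.iUnion h1, fun p hp => ?_, fun p hp => ?_⟩
          · simp only [Set.mem_iUnion]
            exact exists_congr fun i => e0 i p hp
          · simp only [Set.mem_iUnion]
            exact exists_congr fun i => e1 i p hp }
    have hle : predictableSA 𝔾 ≤ mT := by
      unfold predictableSA
      refine iSup_le ?_
      rintro ⟨u, hu1, hu2⟩
      obtain ⟨u0, hm0, he0, u1, hm1, he1⟩ := core F hFmono τ ζ 𝔾 h𝔾 u hu1 hu2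
      rintro S ⟨b, hb, rfl⟩
      refine ⟨(fun p : ℝ × Ω => u0 p.1 p.2) ⁻¹' b, hm0 hb, u1 ⁻¹' b, hm1 hb,
        fun p hp => ?_, fun p hp => ?_⟩
      · exact iff_of_eq (congrArg (· ∈ b) (he0 p.1 p.2 hp))
      · exact iff_of_eq (congrArg (· ∈ b) (he1 p.1 p.2 hp))
    exact fun S hS => hle S hS
  obtain ⟨Y0', hY0m, hY0e⟩ := transfer (predictableSA 𝔾) (predictableSA F) id
    {p : ℝ × Ω | p.1 ≤ τ p.2}
    (fun S hS => by
      obtain ⟨S0, h0, S1, h1, e0, e1⟩ := htop S hS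
      exact ⟨S0, h0, fun p hp => e0 p hp⟩)
    (fun p => Y p.1 p.2) hY
  obtain ⟨Y1', hY1m, hY1e⟩ := transfer (predictableSA 𝔾) ((predictableSA F).prod inferInstance)
    (fun p : ℝ × Ω => (p, (τ p.2, ζ p.2))) {p : ℝ × Ω | τ p.2 < p.1}
    (fun S hS => by
      obtain ⟨S0, h0, S1, h1, e0, e1⟩ := htop S hS
      exact ⟨S1, h1, fun p hp => e1 p hp⟩)
    (fun p => Y p.1 p.2) hY
  refine ⟨fun t ω => Y0' (t, ω), fun t θ e ω => Y1' ((t, ω), (θ, e)), ?_, ?_, ?_⟩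
  · exact hY0m
  · exact hY1m
  · intro t ω
    by_cases h : t ≤ τ ω
    · rw [if_pos h]
      exact hY0e (t, ω) h
    · rw [if_neg h]
      exact hY1e (t, ω) (not_le.mp h)
end

section
/- Consistency of ranked-times reduction: let τ_1, τ_2 be random times with marks ζ_1, ζ_2 and let (τ̂_1, τ̂_2) = (τ_1∧τ_2, τ_1∨τ_2) be the ranked times and ι ∈ {1,2} the index achieving the minimum (with a measurable tie-breaking rule). Then the progressive enlargement of F by the successive times (τ̂_1, τ̂_2) together with the enriched marks (ι, ζ_ι) and (3−ι, ζ_{3−ι}) coincides with the progressive enlargement G = F ∨ D^1 ∨ D^2 by the two original times and marks. -/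
open MeasureTheory Set

namespace RankedAux
open MeasurableSpace


variable {Ω M : Type*} [MeasurableSpace M]

/-- exact-level generator family -/
def gensA (τ : Ω → ℝ) (ζ : Ω → M) (r : ℝ) : Set (Set Ω) :=
  {s | ∃ u ≤ r, s = {ω | τ ω ≤ u} ∨
      ∃ B, MeasurableSet B ∧ s = {ω | τ ω ≤ u ∧ ζ ω ∈ B}}

/-- ray rectangles in `ℝ × M` -/
def raySets (M : Type*) [MeasurableSpace M] : Set (Set (ℝ × M)) :=
  {D | ∃ u : ℝ, ∃ B : Set M, MeasurableSet B ∧ D = Iic u ×ˢ B}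

lemma measurableSet_of_ray (τ : Ω → ℝ) (ζ : Ω → M) (t : ℝ) {D : Set (ℝ × M)}
    (hD : MeasurableSet[generateFrom (raySets M)] D) :
    MeasurableSet[generateFrom (gensA τ ζ t)] {ω | τ ω ≤ t ∧ (τ ω, ζ ω) ∈ D} := by
  have hτt : MeasurableSet[generateFrom (gensA τ ζ t)] {ω | τ ω ≤ t} :=
    measurableSet_generateFrom ⟨t, le_refl t, Or.inl rfl⟩
  let S : MeasurableSpace (ℝ × M) :=
  { MeasurableSet' := fun D =>
      MeasurableSet[generateFrom (gensA τ ζ t)] {ω | τ ω ≤ t ∧ (τ ω, ζ ω) ∈ D}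
    measurableSet_empty := by
      have h : {ω : Ω | τ ω ≤ t ∧ (τ ω, ζ ω) ∈ (∅ : Set (ℝ × M))} = (∅ : Set Ω) := by
        ext ω; simp
      show MeasurableSet[generateFrom (gensA τ ζ t)] _
      rw [h]; exact @MeasurableSet.empty _ (generateFrom (gensA τ ζ t))
    measurableSet_compl := by
      intro D hDm
      have h : {ω : Ω | τ ω ≤ t ∧ (τ ω, ζ ω) ∈ Dᶜ}
          = {ω : Ω | τ ω ≤ t} \ {ω : Ω | τ ω ≤ t ∧ (τ ω, ζ ω) ∈ D} := by
        ext ω; simp only [mem_setOf_eq, mem_diff, mem_compl_iff]; tauto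
      show MeasurableSet[generateFrom (gensA τ ζ t)] _
      rw [h]; exact @MeasurableSet.diff _ (generateFrom (gensA τ ζ t)) _ _ hτt hDm
    measurableSet_iUnion := by
      intro f hf
      have h : {ω : Ω | τ ω ≤ t ∧ (τ ω, ζ ω) ∈ ⋃ i, f i}
          = ⋃ i, {ω : Ω | τ ω ≤ t ∧ (τ ω, ζ ω) ∈ f i} := by
        ext ω
        simp only [mem_setOf_eq, mem_iUnion]
        constructor
        · rintro ⟨h1, i, h2⟩; exact ⟨i, h1, h2⟩
        · rintro ⟨i, h1, h2⟩; exact ⟨h1, i, h2⟩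
      show MeasurableSet[generateFrom (gensA τ ζ t)] _
      rw [h]; exact @MeasurableSet.iUnion _ _ (generateFrom (gensA τ ζ t)) _ _ hf }
  have hle : generateFrom (raySets M) ≤ S := by
    apply generateFrom_le
    rintro D ⟨u, B, hB, rfl⟩
    show MeasurableSet[generateFrom (gensA τ ζ t)] _
    have h : {ω : Ω | τ ω ≤ t ∧ (τ ω, ζ ω) ∈ Iic u ×ˢ B}
        = {ω : Ω | τ ω ≤ min t u ∧ ζ ω ∈ B} := by
      ext ω
      simp only [mem_setOf_eq, Set.mem_prod, Set.mem_Iic, le_min_iff]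
      tauto
    rw [h]
    exact measurableSet_generateFrom ⟨min t u, min_le_left _ _, Or.inr ⟨B, hB, rfl⟩⟩
  exact hle D hD

lemma struct (τ : Ω → ℝ) (ζ : Ω → M) (r : ℝ) {C : Set Ω}
    (hC : MeasurableSet[generateFrom (gensA τ ζ r)] C) :
    ∃ D, MeasurableSet[generateFrom (raySets M)] D ∧
      C ∩ {ω | τ ω ≤ r} = {ω | τ ω ≤ r ∧ (τ ω, ζ ω) ∈ D} ∧
      (C ∩ {ω | r < τ ω} = ∅ ∨ {ω | r < τ ω} ⊆ C) := by
  let P : MeasurableSpace Ω :=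
  { MeasurableSet' := fun C =>
      ∃ D, MeasurableSet[generateFrom (raySets M)] D ∧
        C ∩ {ω | τ ω ≤ r} = {ω | τ ω ≤ r ∧ (τ ω, ζ ω) ∈ D} ∧
        (C ∩ {ω | r < τ ω} = ∅ ∨ {ω | r < τ ω} ⊆ C)
    measurableSet_empty := by
      refine ⟨∅, @MeasurableSet.empty _ (generateFrom (raySets M)), ?_, Or.inl (by simp)⟩
      ext ω; simp
    measurableSet_compl := by
      rintro C ⟨D, hD, hEq, hFlag⟩
      have key : ∀ ω, τ ω ≤ r → (ω ∈ C ↔ (τ ω, ζ ω) ∈ D) := by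
        intro ω hτ
        constructor
        · intro hωC
          have : ω ∈ {ω | τ ω ≤ r ∧ (τ ω, ζ ω) ∈ D} := hEq ▸ (⟨hωC, hτ⟩ : ω ∈ C ∩ _)
          exact this.2
        · intro hg
          have : ω ∈ C ∩ {ω | τ ω ≤ r} := hEq ▸ (⟨hτ, hg⟩ : ω ∈ {ω | τ ω ≤ r ∧ (τ ω, ζ ω) ∈ D})
          exact this.1
      refine ⟨Dᶜ, @MeasurableSet.compl _ _ (generateFrom (raySets M)) hD, ?_, ?_⟩
      · ext ω
        simp only [mem_inter_iff, mem_compl_iff, mem_setOf_eq]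
        constructor
        · rintro ⟨hnC, hτ⟩; exact ⟨hτ, fun hg => hnC ((key ω hτ).mpr hg)⟩
        · rintro ⟨hτ, hng⟩; exact ⟨fun hc => hng ((key ω hτ).mp hc), hτ⟩
      · rcases hFlag with h | h
        · refine Or.inr fun ω hω => ?_
          intro hc
          exact (eq_empty_iff_forall_notMem.mp h ω) ⟨hc, hω⟩
        · refine Or.inl (eq_empty_iff_forall_notMem.mpr fun ω hω => hω.1 (h hω.2))
    measurableSet_iUnion := by
      intro f hf
      choose D hD hEq hFlag using hf
      refine ⟨⋃ i, D i, @MeasurableSet.iUnion _ _ (generateFrom (raySets M)) _ _ hD, ?_, ?_⟩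
      · rw [Set.iUnion_inter, iUnion_congr hEq]
        ext ω
        simp only [mem_iUnion, mem_setOf_eq]
        constructor
        · rintro ⟨i, h1, h2⟩; exact ⟨h1, i, h2⟩
        · rintro ⟨h1, i, h2⟩; exact ⟨i, h1, h2⟩
      · by_cases h : ∃ i, {ω | r < τ ω} ⊆ f i
        · obtain ⟨i, hi⟩ := h
          exact Or.inr fun ω hω => mem_iUnion.mpr ⟨i, hi hω⟩
        · refine Or.inl (eq_empty_iff_forall_notMem.mpr ?_)
          rintro ω ⟨hωU, hωr⟩
          obtain ⟨i, hωi⟩ := mem_iUnion.mp hωU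
          rcases hFlag i with h' | h'
          · exact (eq_empty_iff_forall_notMem.mp h' ω) ⟨hωi, hωr⟩
          · exact h ⟨i, h'⟩ }
  have hgen : generateFrom (gensA τ ζ r) ≤ P := by
    apply generateFrom_le
    rintro s ⟨u, hu, h | ⟨B, hB, h⟩⟩
    · subst h
      refine ⟨Iic u ×ˢ univ, measurableSet_generateFrom ⟨u, univ, MeasurableSet.univ, rfl⟩,
        ?_, Or.inl ?_⟩
      · ext ω
        simp only [mem_inter_iff, mem_setOf_eq, Set.mem_prod, Set.mem_Iic, mem_univ, and_true]
        constructor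
        · rintro ⟨h1, h2⟩; exact ⟨h2, h1⟩
        · rintro ⟨h1, h2⟩; exact ⟨h2, h1⟩
      · refine eq_empty_iff_forall_notMem.mpr ?_
        rintro ω ⟨h1, h2⟩
        simp only [mem_setOf_eq] at h1 h2
        linarith
    · subst h
      refine ⟨Iic u ×ˢ B, measurableSet_generateFrom ⟨u, B, hB, rfl⟩, ?_, Or.inl ?_⟩
      · ext ω
        simp only [mem_inter_iff, mem_setOf_eq, Set.mem_prod, Set.mem_Iic]
        constructor
        · rintro ⟨⟨h1, h3⟩, h2⟩; exact ⟨h2, h1, h3⟩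
        · rintro ⟨h2, h1, h3⟩; exact ⟨⟨h1, h3⟩, h2⟩
      · refine eq_empty_iff_forall_notMem.mpr ?_
        rintro ω ⟨h1, h2⟩
        simp only [mem_setOf_eq] at h1 h2
        linarith [h1.1]
  exact hgen C hC


lemma progSA_eq_generateFrom (τ : Ω → ℝ) (ζ : Ω → M) (t : ℝ) :
    progSA τ ζ t = generateFrom (gensA τ ζ t) := by
  have hiInf : progSA τ ζ t = ⨅ ε : {ε : ℝ // 0 < ε}, generateFrom (gensA τ ζ (t + ε.1)) := rfl
  refine le_antisymm ?_ ?_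
  · intro C hC
    rw [hiInf] at hC
    have h : ∀ n : ℕ, MeasurableSet[generateFrom (gensA τ ζ (t + 1/(n+1)))] C := by
      intro n
      exact iInf_le (fun ε : {ε : ℝ // 0 < ε} => generateFrom (gensA τ ζ (t + ε.1)))
        ⟨1/(n+1), by positivity⟩ C hC
    have hs := fun n : ℕ => struct τ ζ (t + 1/(n+1)) (h n)
    choose D hD hEq hFlag using hs
    have hpos : ∀ n : ℕ, (0:ℝ) < 1/(n+1) := fun n => by positivity
    -- key fact at level t from level 0
    have fact : C ∩ {ω | τ ω ≤ t} = {ω | τ ω ≤ t ∧ (τ ω, ζ ω) ∈ D 0} := by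
      have key0 := Set.ext_iff.mp (hEq 0)
      ext ω
      constructor
      · rintro ⟨hωC, hτ⟩
        have hτ' : τ ω ≤ t := hτ
        have hm := (key0 ω).mp ⟨hωC, by have := hpos 0; exact le_trans hτ' (by linarith)⟩
        exact ⟨hτ', hm.2⟩
      · rintro ⟨hτ, hg⟩
        have hm := (key0 ω).mpr ⟨by have := hpos 0; linarith, hg⟩
        exact ⟨hm.1, hτ⟩
    have hfirst : MeasurableSet[generateFrom (gensA τ ζ t)] {ω | τ ω ≤ t ∧ (τ ω, ζ ω) ∈ D 0} :=
      measurableSet_of_ray τ ζ t (hD 0)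
    by_cases hev : ∃ N : ℕ, ∀ n, N ≤ n → C ∩ {ω | t + 1/(n+1) < τ ω} = ∅
    · obtain ⟨N, hN⟩ := hev
      have hsub : C ⊆ {ω | τ ω ≤ t} := by
        intro ω hω
        by_contra hlt
        have hlt' : t < τ ω := not_le.mp hlt
        obtain ⟨n₀, hn₀⟩ := exists_nat_one_div_lt (sub_pos.mpr hlt')
        set n := max N n₀ with hn
        have h1 : 1/((n:ℝ)+1) ≤ 1/((n₀:ℝ)+1) := by
          apply one_div_le_one_div_of_le (by positivity)
          exact_mod_cast Nat.succ_le_succ (le_max_right N n₀)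
        have h2 : t + 1/((n:ℝ)+1) < τ ω := by
          linarith
        exact eq_empty_iff_forall_notMem.mp (hN n (le_max_left N n₀)) ω ⟨hω, h2⟩
      have hCeq : C = {ω | τ ω ≤ t ∧ (τ ω, ζ ω) ∈ D 0} := by
        rw [← fact, Set.inter_eq_self_of_subset_left hsub]
      rw [hCeq]; exact hfirst
    · push_neg at hev
      have hful : ∀ N : ℕ, ∃ n, N ≤ n ∧ {ω | t + 1/(n+1) < τ ω} ⊆ C := by
        intro N
        obtain ⟨n, hn, hne⟩ := hev N
        rcases hFlag n with h' | h'
        · obtain ⟨ω, hω⟩ := hne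
          rw [h'] at hω
          exact absurd hω (notMem_empty ω)
        · exact ⟨n, hn, h'⟩
      have hCeq : C = {ω | τ ω ≤ t ∧ (τ ω, ζ ω) ∈ D 0} ∪ {ω | τ ω ≤ t}ᶜ := by
        ext ω
        constructor
        · intro hω
          by_cases hτ : τ ω ≤ t
          · left
            have : ω ∈ C ∩ {ω | τ ω ≤ t} := ⟨hω, hτ⟩
            rw [fact] at this; exact this
          · right; exact hτ
        · rintro (⟨hτ, hg⟩ | hτ)
          · have : ω ∈ C ∩ {ω | τ ω ≤ t} := by rw [fact]; exact ⟨hτ, hg⟩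
            exact this.1
          · have hlt : t < τ ω := not_le.mp hτ
            obtain ⟨n₀, hn₀⟩ := exists_nat_one_div_lt (sub_pos.mpr hlt)
            obtain ⟨n, hn, hsub⟩ := hful n₀
            apply hsub
            show t + 1/((n:ℝ)+1) < τ ω
            have h1 : 1/((n:ℝ)+1) ≤ 1/((n₀:ℝ)+1) := by
              apply one_div_le_one_div_of_le (by positivity)
              exact_mod_cast Nat.succ_le_succ hn
            linarith
      rw [hCeq]
      exact MeasurableSet.union hfirst
        (MeasurableSet.compl (measurableSet_generateFrom ⟨t, le_refl t, Or.inl rfl⟩))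
  · rw [hiInf]
    refine le_iInf fun ε => generateFrom_mono ?_
    rintro s ⟨u, hu, h⟩
    exact ⟨u, by linarith [ε.2], h⟩

section abcd

variable {E : Type*} [MeasurableSpace E] {m : MeasurableSpace Ω}
  {τ₁ τ₂ : Ω → ℝ} {ζ₁ ζ₂ : Ω → E} {t u : ℝ}

/-- (a)-set: `{τ₂ < τ₁ ≤ u, ζ₁ ∈ B}` -/
lemma meas_lt_first
    (h1B : ∀ u ≤ t, ∀ B : Set E, MeasurableSet B → MeasurableSet[m] {ω | τ₁ ω ≤ u ∧ ζ₁ ω ∈ B})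
    (h1 : ∀ u ≤ t, MeasurableSet[m] {ω | τ₁ ω ≤ u})
    (h2 : ∀ u ≤ t, MeasurableSet[m] {ω | τ₂ ω ≤ u})
    (hu : u ≤ t) {B : Set E} (hB : MeasurableSet B) :
    MeasurableSet[m] {ω | τ₂ ω < τ₁ ω ∧ τ₁ ω ≤ u ∧ ζ₁ ω ∈ B} := by
  have hid : {ω | τ₂ ω < τ₁ ω ∧ τ₁ ω ≤ u ∧ ζ₁ ω ∈ B}
      = ⋃ q : {q : ℚ // (q : ℝ) ≤ u},
          ({ω | τ₁ ω ≤ u ∧ ζ₁ ω ∈ B} ∩ ({ω | τ₂ ω ≤ (q : ℝ)} ∩ {ω | τ₁ ω ≤ (q : ℝ)}ᶜ)) := by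
    ext ω
    simp only [mem_setOf_eq, mem_iUnion, mem_inter_iff, mem_compl_iff]
    constructor
    · rintro ⟨hlt, hu', hB'⟩
      obtain ⟨q, hq1, hq2⟩ := exists_rat_btwn hlt
      exact ⟨⟨q, le_of_lt (lt_of_lt_of_le hq2 hu')⟩, ⟨hu', hB'⟩, le_of_lt hq1, not_le.mpr hq2⟩
    · rintro ⟨q, ⟨hu', hB'⟩, hq2, hq3⟩
      exact ⟨lt_of_le_of_lt hq2 (not_le.mp hq3), hu', hB'⟩
  rw [hid]
  refine MeasurableSet.iUnion fun q => ?_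
  exact (h1B u hu B hB).inter ((h2 q (le_trans q.2 hu)).inter (h1 q (le_trans q.2 hu)).compl)

/-- (b)-set: `{τ₂ < τ₁, τ₂ ≤ u, ζ₂ ∈ B}` -/
lemma meas_lt_second
    (h2B : ∀ u ≤ t, ∀ B : Set E, MeasurableSet B → MeasurableSet[m] {ω | τ₂ ω ≤ u ∧ ζ₂ ω ∈ B})
    (h1 : ∀ u ≤ t, MeasurableSet[m] {ω | τ₁ ω ≤ u})
    (hu : u ≤ t) {B : Set E} (hB : MeasurableSet B) :
    MeasurableSet[m] {ω | τ₂ ω < τ₁ ω ∧ τ₂ ω ≤ u ∧ ζ₂ ω ∈ B} := by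
  have hid : {ω | τ₂ ω < τ₁ ω ∧ τ₂ ω ≤ u ∧ ζ₂ ω ∈ B}
      = ({ω | τ₂ ω ≤ u ∧ ζ₂ ω ∈ B} ∩ {ω | τ₁ ω ≤ u}ᶜ) ∪
        ⋃ q : {q : ℚ // (q : ℝ) ≤ u},
          ({ω | τ₂ ω ≤ (q : ℝ) ∧ ζ₂ ω ∈ B} ∩ {ω | τ₁ ω ≤ (q : ℝ)}ᶜ) := by
    ext ω
    simp only [mem_setOf_eq, mem_union, mem_iUnion, mem_inter_iff, mem_compl_iff]
    constructor
    · rintro ⟨hlt, hu', hB'⟩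
      by_cases h : τ₁ ω ≤ u
      · right
        obtain ⟨q, hq1, hq2⟩ := exists_rat_btwn hlt
        exact ⟨⟨q, le_of_lt (lt_of_lt_of_le hq2 h)⟩, ⟨le_of_lt hq1, hB'⟩, not_le.mpr hq2⟩
      · left; exact ⟨⟨hu', hB'⟩, h⟩
    · rintro (⟨⟨hu', hB'⟩, h⟩ | ⟨q, ⟨hq, hB'⟩, hn⟩)
      · exact ⟨lt_of_le_of_lt hu' (not_le.mp h), hu', hB'⟩
      · exact ⟨lt_of_le_of_lt hq (not_le.mp hn), le_trans hq q.2, hB'⟩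
  rw [hid]
  refine MeasurableSet.union ((h2B u hu B hB).inter (h1 u hu).compl) ?_
  refine MeasurableSet.iUnion fun q => ?_
  exact (h2B q (le_trans q.2 hu) B hB).inter (h1 q (le_trans q.2 hu)).compl

/-- (c)-set: `{τ₁ ≤ τ₂, τ₁ ≤ u, ζ₁ ∈ B}` -/
lemma meas_le_first
    (h1B : ∀ u ≤ t, ∀ B : Set E, MeasurableSet B → MeasurableSet[m] {ω | τ₁ ω ≤ u ∧ ζ₁ ω ∈ B})
    (h1 : ∀ u ≤ t, MeasurableSet[m] {ω | τ₁ ω ≤ u})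
    (h2 : ∀ u ≤ t, MeasurableSet[m] {ω | τ₂ ω ≤ u})
    (hu : u ≤ t) {B : Set E} (hB : MeasurableSet B) :
    MeasurableSet[m] {ω | τ₁ ω ≤ τ₂ ω ∧ τ₁ ω ≤ u ∧ ζ₁ ω ∈ B} := by
  have hid : {ω | τ₁ ω ≤ τ₂ ω ∧ τ₁ ω ≤ u ∧ ζ₁ ω ∈ B}
      = {ω | τ₁ ω ≤ u ∧ ζ₁ ω ∈ B} \ {ω | τ₂ ω < τ₁ ω ∧ τ₁ ω ≤ u ∧ ζ₁ ω ∈ B} := by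
    ext ω
    simp only [mem_setOf_eq, mem_diff]
    constructor
    · rintro ⟨hle, hu', hB'⟩
      exact ⟨⟨hu', hB'⟩, fun h => absurd hle (not_le.mpr h.1)⟩
    · rintro ⟨⟨hu', hB'⟩, hn⟩
      refine ⟨not_lt.mp fun h => hn ⟨h, hu', hB'⟩, hu', hB'⟩
  rw [hid]
  exact (h1B u hu B hB).diff (meas_lt_first h1B h1 h2 hu hB)

/-- (d)-set: `{τ₁ ≤ τ₂, τ₂ ≤ u, ζ₂ ∈ B}` -/
lemma meas_le_second
    (h2B : ∀ u ≤ t, ∀ B : Set E, MeasurableSet B → MeasurableSet[m] {ω | τ₂ ω ≤ u ∧ ζ₂ ω ∈ B})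
    (h1 : ∀ u ≤ t, MeasurableSet[m] {ω | τ₁ ω ≤ u})
    (hu : u ≤ t) {B : Set E} (hB : MeasurableSet B) :
    MeasurableSet[m] {ω | τ₁ ω ≤ τ₂ ω ∧ τ₂ ω ≤ u ∧ ζ₂ ω ∈ B} := by
  have hid : {ω | τ₁ ω ≤ τ₂ ω ∧ τ₂ ω ≤ u ∧ ζ₂ ω ∈ B}
      = {ω | τ₂ ω ≤ u ∧ ζ₂ ω ∈ B} \ {ω | τ₂ ω < τ₁ ω ∧ τ₂ ω ≤ u ∧ ζ₂ ω ∈ B} := by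
    ext ω
    simp only [mem_setOf_eq, mem_diff]
    constructor
    · rintro ⟨hle, hu', hB'⟩
      exact ⟨⟨hu', hB'⟩, fun h => absurd hle (not_le.mpr h.1)⟩
    · rintro ⟨⟨hu', hB'⟩, hn⟩
      refine ⟨not_lt.mp fun h => hn ⟨h, hu', hB'⟩, hu', hB'⟩
  rw [hid]
  exact (h2B u hu B hB).diff (meas_lt_second h2B h1 hu hB)

end abcd

section main
variable {Ω E : Type*} [MeasurableSpace E]

theorem main_gen_eq
    (F : ℝ → MeasurableSpace Ω)
    (τ₁ τ₂ : Ω → ℝ) (ζ₁ ζ₂ : Ω → E)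
    (τh₁ τh₂ : Ω → ℝ)
    (hτh₁ : ∀ ω, τh₁ ω = min (τ₁ ω) (τ₂ ω))
    (hτh₂ : ∀ ω, τh₂ ω = max (τ₁ ω) (τ₂ ω))
    (ι : Ω → Fin 2) (hι : ∀ ω, ι ω = if τ₁ ω ≤ τ₂ ω then 0 else 1)
    (ξ₁ ξ₂ : Ω → Fin 2 × E)
    (hξ₁ : ∀ ω, ξ₁ ω = (ι ω, if τ₁ ω ≤ τ₂ ω then ζ₁ ω else ζ₂ ω))
    (hξ₂ : ∀ ω, ξ₂ ω = (1 - ι ω, if τ₁ ω ≤ τ₂ ω then ζ₂ ω else ζ₁ ω))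
    (t : ℝ) :
    F t ⊔ generateFrom (gensA τh₁ ξ₁ t) ⊔ generateFrom (gensA τh₂ ξ₂ t)
      = F t ⊔ generateFrom (gensA τ₁ ζ₁ t) ⊔ generateFrom (gensA τ₂ ζ₂ t) := by
  set mR : MeasurableSpace Ω :=
    F t ⊔ generateFrom (gensA τ₁ ζ₁ t) ⊔ generateFrom (gensA τ₂ ζ₂ t) with hmR
  set mL : MeasurableSpace Ω :=
    F t ⊔ generateFrom (gensA τh₁ ξ₁ t) ⊔ generateFrom (gensA τh₂ ξ₂ t) with hmL
  -- basic generators in mR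
  have hle1R : generateFrom (gensA τ₁ ζ₁ t) ≤ mR := le_trans le_sup_right le_sup_left
  have hle2R : generateFrom (gensA τ₂ ζ₂ t) ≤ mR := le_sup_right
  have hle1L : generateFrom (gensA τh₁ ξ₁ t) ≤ mL := le_trans le_sup_right le_sup_left
  have hle2L : generateFrom (gensA τh₂ ξ₂ t) ≤ mL := le_sup_right
  have hR1 : ∀ u ≤ t, MeasurableSet[mR] {ω | τ₁ ω ≤ u} := fun u hu =>
    hle1R _ (measurableSet_generateFrom ⟨u, hu, Or.inl rfl⟩)
  have hR2 : ∀ u ≤ t, MeasurableSet[mR] {ω | τ₂ ω ≤ u} := fun u hu =>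
    hle2R _ (measurableSet_generateFrom ⟨u, hu, Or.inl rfl⟩)
  have hR1B : ∀ u ≤ t, ∀ B : Set E, MeasurableSet B →
      MeasurableSet[mR] {ω | τ₁ ω ≤ u ∧ ζ₁ ω ∈ B} := fun u hu B hB =>
    hle1R _ (measurableSet_generateFrom ⟨u, hu, Or.inr ⟨B, hB, rfl⟩⟩)
  have hR2B : ∀ u ≤ t, ∀ B : Set E, MeasurableSet B →
      MeasurableSet[mR] {ω | τ₂ ω ≤ u ∧ ζ₂ ω ∈ B} := fun u hu B hB =>
    hle2R _ (measurableSet_generateFrom ⟨u, hu, Or.inr ⟨B, hB, rfl⟩⟩)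
  -- Direction A: hatted generators are mR-measurable
  have genH1 : generateFrom (gensA τh₁ ξ₁ t) ≤ mR := by
    apply generateFrom_le
    rintro s ⟨u, hu, h | ⟨B, hB, rfl⟩⟩
    · subst h
      have hid : {ω | τh₁ ω ≤ u} = {ω | τ₁ ω ≤ u} ∪ {ω | τ₂ ω ≤ u} := by
        ext ω
        simp only [mem_setOf_eq, mem_union, hτh₁ ω, min_le_iff]
      rw [hid]
      exact (hR1 u hu).union (hR2 u hu)
    · have hB₀ : MeasurableSet {e : E | ((0 : Fin 2), e) ∈ B} := measurable_prodMk_left hB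
      have hB₁ : MeasurableSet {e : E | ((1 : Fin 2), e) ∈ B} := measurable_prodMk_left hB
      have hid : {ω | τh₁ ω ≤ u ∧ ξ₁ ω ∈ B}
          = {ω | τ₁ ω ≤ τ₂ ω ∧ τ₁ ω ≤ u ∧ ζ₁ ω ∈ {e : E | ((0 : Fin 2), e) ∈ B}}
            ∪ {ω | τ₂ ω < τ₁ ω ∧ τ₂ ω ≤ u ∧ ζ₂ ω ∈ {e : E | ((1 : Fin 2), e) ∈ B}} := by
        ext ω
        simp only [mem_setOf_eq, mem_union]
        by_cases hc : τ₁ ω ≤ τ₂ ω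
        · have hx : ξ₁ ω = ((0 : Fin 2), ζ₁ ω) := by
            rw [hξ₁ ω, hι ω, if_pos hc, if_pos hc]
          have hm : τh₁ ω = τ₁ ω := by rw [hτh₁ ω, min_eq_left hc]
          rw [hx, hm]
          constructor
          · rintro ⟨h1, h2⟩; exact Or.inl ⟨hc, h1, h2⟩
          · rintro (⟨_, h1, h2⟩ | ⟨hlt, _, _⟩)
            · exact ⟨h1, h2⟩
            · exact absurd hc (not_le.mpr hlt)
        · have hlt := not_le.mp hc
          have hx : ξ₁ ω = ((1 : Fin 2), ζ₂ ω) := by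
            rw [hξ₁ ω, hι ω, if_neg hc, if_neg hc]
          have hm : τh₁ ω = τ₂ ω := by rw [hτh₁ ω, min_eq_right hlt.le]
          rw [hx, hm]
          constructor
          · rintro ⟨h1, h2⟩; exact Or.inr ⟨hlt, h1, h2⟩
          · rintro (⟨hc', _, _⟩ | ⟨_, h1, h2⟩)
            · exact absurd hc' hc
            · exact ⟨h1, h2⟩
      rw [hid]
      exact (meas_le_first hR1B hR1 hR2 hu hB₀).union (meas_lt_second hR2B hR1 hu hB₁)
  have genH2 : generateFrom (gensA τh₂ ξ₂ t) ≤ mR := by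
    apply generateFrom_le
    rintro s ⟨u, hu, h | ⟨B, hB, rfl⟩⟩
    · subst h
      have hid : {ω | τh₂ ω ≤ u} = {ω | τ₁ ω ≤ u} ∩ {ω | τ₂ ω ≤ u} := by
        ext ω
        simp only [mem_setOf_eq, mem_inter_iff, hτh₂ ω, max_le_iff]
      rw [hid]
      exact (hR1 u hu).inter (hR2 u hu)
    · have hB₀ : MeasurableSet {e : E | ((0 : Fin 2), e) ∈ B} := measurable_prodMk_left hB
      have hB₁ : MeasurableSet {e : E | ((1 : Fin 2), e) ∈ B} := measurable_prodMk_left hB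
      have hid : {ω | τh₂ ω ≤ u ∧ ξ₂ ω ∈ B}
          = {ω | τ₁ ω ≤ τ₂ ω ∧ τ₂ ω ≤ u ∧ ζ₂ ω ∈ {e : E | ((1 : Fin 2), e) ∈ B}}
            ∪ {ω | τ₂ ω < τ₁ ω ∧ τ₁ ω ≤ u ∧ ζ₁ ω ∈ {e : E | ((0 : Fin 2), e) ∈ B}} := by
        ext ω
        simp only [mem_setOf_eq, mem_union]
        by_cases hc : τ₁ ω ≤ τ₂ ω
        · have hx : ξ₂ ω = ((1 : Fin 2), ζ₂ ω) := by
            rw [hξ₂ ω, hι ω, if_pos hc, if_pos hc]; rfl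
          have hm : τh₂ ω = τ₂ ω := by rw [hτh₂ ω, max_eq_right hc]
          rw [hx, hm]
          constructor
          · rintro ⟨h1, h2⟩; exact Or.inl ⟨hc, h1, h2⟩
          · rintro (⟨_, h1, h2⟩ | ⟨hlt, _, _⟩)
            · exact ⟨h1, h2⟩
            · exact absurd hc (not_le.mpr hlt)
        · have hlt := not_le.mp hc
          have hx : ξ₂ ω = ((0 : Fin 2), ζ₁ ω) := by
            rw [hξ₂ ω, hι ω, if_neg hc, if_neg hc]; rfl
          have hm : τh₂ ω = τ₁ ω := by rw [hτh₂ ω, max_eq_left hlt.le]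
          rw [hx, hm]
          constructor
          · rintro ⟨h1, h2⟩; exact Or.inr ⟨hlt, h1, h2⟩
          · rintro (⟨hc', _, _⟩ | ⟨_, h1, h2⟩)
            · exact absurd hc' hc
            · exact ⟨h1, h2⟩
      rw [hid]
      exact (meas_le_second hR2B hR1 hu hB₁).union (meas_lt_first hR1B hR1 hR2 hu hB₀)
  -- Direction B: original generators are mL-measurable
  have key1 : ∀ u, u ≤ t → ∀ B : Set E, MeasurableSet B →
      MeasurableSet[mL] {ω | τ₁ ω ≤ u ∧ ζ₁ ω ∈ B} := by
    intro u hu B hB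
    have hBp : MeasurableSet {p : Fin 2 × E | p.1 = 0 ∧ p.2 ∈ B} :=
      (measurable_fst (measurableSet_singleton (0 : Fin 2))).inter (measurable_snd hB)
    have hid : {ω | τ₁ ω ≤ u ∧ ζ₁ ω ∈ B}
        = {ω | τh₁ ω ≤ u ∧ ξ₁ ω ∈ {p : Fin 2 × E | p.1 = 0 ∧ p.2 ∈ B}}
          ∪ {ω | τh₂ ω ≤ u ∧ ξ₂ ω ∈ {p : Fin 2 × E | p.1 = 0 ∧ p.2 ∈ B}} := by
      ext ω
      simp only [mem_setOf_eq, mem_union]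
      by_cases hc : τ₁ ω ≤ τ₂ ω
      · have hx1 : ξ₁ ω = ((0 : Fin 2), ζ₁ ω) := by
          rw [hξ₁ ω, hι ω, if_pos hc, if_pos hc]
        have hx2 : ξ₂ ω = ((1 : Fin 2), ζ₂ ω) := by
          rw [hξ₂ ω, hι ω, if_pos hc, if_pos hc]; rfl
        have hm1 : τh₁ ω = τ₁ ω := by rw [hτh₁ ω, min_eq_left hc]
        have hm2 : τh₂ ω = τ₂ ω := by rw [hτh₂ ω, max_eq_right hc]
        rw [hx1, hx2, hm1, hm2]
        constructor
        · rintro ⟨h1, h2⟩; exact Or.inl ⟨h1, rfl, h2⟩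
        · rintro (⟨h1, _, h2⟩ | ⟨_, h1, _⟩)
          · exact ⟨h1, h2⟩
          · exact absurd (show (1 : Fin 2) = 0 from h1) (by decide)
      · have hlt := not_le.mp hc
        have hx1 : ξ₁ ω = ((1 : Fin 2), ζ₂ ω) := by
          rw [hξ₁ ω, hι ω, if_neg hc, if_neg hc]
        have hx2 : ξ₂ ω = ((0 : Fin 2), ζ₁ ω) := by
          rw [hξ₂ ω, hι ω, if_neg hc, if_neg hc]; rfl
        have hm1 : τh₁ ω = τ₂ ω := by rw [hτh₁ ω, min_eq_right hlt.le]
        have hm2 : τh₂ ω = τ₁ ω := by rw [hτh₂ ω, max_eq_left hlt.le]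
        rw [hx1, hx2, hm1, hm2]
        constructor
        · rintro ⟨h1, h2⟩; exact Or.inr ⟨h1, rfl, h2⟩
        · rintro (⟨_, h1, _⟩ | ⟨h1, _, h2⟩)
          · exact absurd (show (1 : Fin 2) = 0 from h1) (by decide)
          · exact ⟨h1, h2⟩
    rw [hid]
    exact MeasurableSet.union
      (hle1L _ (measurableSet_generateFrom ⟨u, hu, Or.inr ⟨_, hBp, rfl⟩⟩))
      (hle2L _ (measurableSet_generateFrom ⟨u, hu, Or.inr ⟨_, hBp, rfl⟩⟩))
  have key2 : ∀ u, u ≤ t → ∀ B : Set E, MeasurableSet B →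
      MeasurableSet[mL] {ω | τ₂ ω ≤ u ∧ ζ₂ ω ∈ B} := by
    intro u hu B hB
    have hBp : MeasurableSet {p : Fin 2 × E | p.1 = 1 ∧ p.2 ∈ B} :=
      (measurable_fst (measurableSet_singleton (1 : Fin 2))).inter (measurable_snd hB)
    have hid : {ω | τ₂ ω ≤ u ∧ ζ₂ ω ∈ B}
        = {ω | τh₁ ω ≤ u ∧ ξ₁ ω ∈ {p : Fin 2 × E | p.1 = 1 ∧ p.2 ∈ B}}
          ∪ {ω | τh₂ ω ≤ u ∧ ξ₂ ω ∈ {p : Fin 2 × E | p.1 = 1 ∧ p.2 ∈ B}} := by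
      ext ω
      simp only [mem_setOf_eq, mem_union]
      by_cases hc : τ₁ ω ≤ τ₂ ω
      · have hx1 : ξ₁ ω = ((0 : Fin 2), ζ₁ ω) := by
          rw [hξ₁ ω, hι ω, if_pos hc, if_pos hc]
        have hx2 : ξ₂ ω = ((1 : Fin 2), ζ₂ ω) := by
          rw [hξ₂ ω, hι ω, if_pos hc, if_pos hc]; rfl
        have hm1 : τh₁ ω = τ₁ ω := by rw [hτh₁ ω, min_eq_left hc]
        have hm2 : τh₂ ω = τ₂ ω := by rw [hτh₂ ω, max_eq_right hc]
        rw [hx1, hx2, hm1, hm2]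
        constructor
        · rintro ⟨h1, h2⟩; exact Or.inr ⟨h1, rfl, h2⟩
        · rintro (⟨_, h1, _⟩ | ⟨h1, _, h2⟩)
          · exact absurd (show (0 : Fin 2) = 1 from h1) (by decide)
          · exact ⟨h1, h2⟩
      · have hlt := not_le.mp hc
        have hx1 : ξ₁ ω = ((1 : Fin 2), ζ₂ ω) := by
          rw [hξ₁ ω, hι ω, if_neg hc, if_neg hc]
        have hx2 : ξ₂ ω = ((0 : Fin 2), ζ₁ ω) := by
          rw [hξ₂ ω, hι ω, if_neg hc, if_neg hc]; rfl
        have hm1 : τh₁ ω = τ₂ ω := by rw [hτh₁ ω, min_eq_right hlt.le]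
        have hm2 : τh₂ ω = τ₁ ω := by rw [hτh₂ ω, max_eq_left hlt.le]
        rw [hx1, hx2, hm1, hm2]
        constructor
        · rintro ⟨h1, h2⟩; exact Or.inl ⟨h1, rfl, h2⟩
        · rintro (⟨h1, _, h2⟩ | ⟨_, h1, _⟩)
          · exact ⟨h1, h2⟩
          · exact absurd (show (0 : Fin 2) = 1 from h1) (by decide)
    rw [hid]
    exact MeasurableSet.union
      (hle1L _ (measurableSet_generateFrom ⟨u, hu, Or.inr ⟨_, hBp, rfl⟩⟩))
      (hle2L _ (measurableSet_generateFrom ⟨u, hu, Or.inr ⟨_, hBp, rfl⟩⟩))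
  have gen1 : generateFrom (gensA τ₁ ζ₁ t) ≤ mL := by
    apply generateFrom_le
    rintro s ⟨u, hu, h | ⟨B, hB, rfl⟩⟩
    · subst h
      have hid : {ω | τ₁ ω ≤ u} = {ω | τ₁ ω ≤ u ∧ ζ₁ ω ∈ (univ : Set E)} := by
        ext ω; simp
      rw [hid]
      exact key1 u hu univ MeasurableSet.univ
    · exact key1 u hu B hB
  have gen2 : generateFrom (gensA τ₂ ζ₂ t) ≤ mL := by
    apply generateFrom_le
    rintro s ⟨u, hu, h | ⟨B, hB, rfl⟩⟩
    · subst h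
      have hid : {ω | τ₂ ω ≤ u} = {ω | τ₂ ω ≤ u ∧ ζ₂ ω ∈ (univ : Set E)} := by
        ext ω; simp
      rw [hid]
      exact key2 u hu univ MeasurableSet.univ
    · exact key2 u hu B hB
  refine le_antisymm ?_ ?_
  · exact sup_le (sup_le (le_trans le_sup_left le_sup_left) genH1) genH2
  · exact sup_le (sup_le (le_trans le_sup_left le_sup_left) gen1) gen2

end main

end RankedAux

/-- consistency of the ranked-times reduction.  Let `τ̂_1 = τ_1 ∧ τ_2`,
`τ̂_2 = τ_1 ∨ τ_2` be the ranked times and `ι` the index achieving the minimum (tie-break: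
`ι = 1` when `τ_1 ≤ τ_2`).  The progressive enlargement of `F` by the successive times
`(τ̂_1, τ̂_2)` with the enriched marks `(ι, ζ_ι)` and `(3−ι, ζ_{3−ι})` (valued in
`Fin 2 × E`) coincides with `G = F ∨ D^1 ∨ D^2`. -/
theorem ranked_times_reduction_filtration_eq
    {Ω E : Type*} [MeasurableSpace Ω] [MeasurableSpace E]
    (F : ℝ → MeasurableSpace Ω) (hFmono : Monotone F)
    (hF : ∀ t, F t ≤ ‹MeasurableSpace Ω›)
    (τ₁ τ₂ : Ω → ℝ) (hτ₁ : Measurable τ₁) (hτ₂ : Measurable τ₂)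
    (hτ₁0 : ∀ ω, 0 ≤ τ₁ ω) (hτ₂0 : ∀ ω, 0 ≤ τ₂ ω)
    (ζ₁ ζ₂ : Ω → E) (hζ₁ : Measurable ζ₁) (hζ₂ : Measurable ζ₂)
    -- ranked times
    (τh₁ τh₂ : Ω → ℝ)
    (hτh₁ : ∀ ω, τh₁ ω = min (τ₁ ω) (τ₂ ω))
    (hτh₂ : ∀ ω, τh₂ ω = max (τ₁ ω) (τ₂ ω))
    -- index of the first time to occur, with measurable tie-breaking rule
    (ι : Ω → Fin 2) (hι : ∀ ω, ι ω = if τ₁ ω ≤ τ₂ ω then 0 else 1)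
    -- enriched marks
    (ξ₁ ξ₂ : Ω → Fin 2 × E)
    (hξ₁ : ∀ ω, ξ₁ ω = (ι ω, if τ₁ ω ≤ τ₂ ω then ζ₁ ω else ζ₂ ω))
    (hξ₂ : ∀ ω, ξ₂ ω = (1 - ι ω, if τ₁ ω ≤ τ₂ ω then ζ₂ ω else ζ₁ ω)) :
    ∀ t : ℝ,
      F t ⊔ progSA τh₁ ξ₁ t ⊔ progSA τh₂ ξ₂ t
        = F t ⊔ progSA τ₁ ζ₁ t ⊔ progSA τ₂ ζ₂ t := by
  intro t
  rw [RankedAux.progSA_eq_generateFrom τh₁ ξ₁ t, RankedAux.progSA_eq_generateFrom τh₂ ξ₂ t,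
    RankedAux.progSA_eq_generateFrom τ₁ ζ₁ t, RankedAux.progSA_eq_generateFrom τ₂ ζ₂ t]
  exact RankedAux.main_gen_eq F τ₁ τ₂ ζ₁ ζ₂ τh₁ τh₂ hτh₁ hτh₂ ι hι ξ₁ ξ₂ hξ₁ hξ₂ t
end
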